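/- Let Γ=(G,σ) be a signed graph on n vertices with nonnegative potential κ≥0. For all real numbers 1≤p≤q and every f∈S_q: 2^{−p}·R_p^σ(φ_{q,p}(f)) ≥ 2^{−q}·R_q^σ(f), and p·(R_p^σ(φ_{q,p}(f))/𝒟)^{1/p} ≤ q·(R_q^σ(f)/𝒟)^{1/q}, where 𝒟 = max_{1≤i≤n} (2κ_i + Σ_{j∼i} w_{ij})/(2μ_i). -/

import Mathlib

open Filter Topology Polynomial
open scoped Classical

noncomputable section

variable {V : Type} [Fintype V] [DecidableEq V]

/-- Sum of a (symmetric) summand over the unordered edges of `G`. -/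
def sgEdgeSum (G : SimpleGraph V) (F : V → V → ℝ) : ℝ :=
  (∑ i : V, ∑ j : V, if G.Adj i j then F i j else 0) / 2

/-- The Rayleigh quotient `R_p^σ` of the signed graph `p`-Laplacian with
edge weight `w`, signature `sgn`, vertex measure `μ` and potential `κ`. -/
def sgRayleigh (G : SimpleGraph V) (w sgn : V → V → ℝ) (μ κ : V → ℝ)
    (p : ℝ) (f : V → ℝ) : ℝ :=
  (sgEdgeSum G (fun i j => w i j * |f i - sgn i j * f j| ^ p) +
      ∑ i : V, κ i * |f i| ^ p) /
    ∑ i : V, μ i * |f i| ^ p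

/-- The unit sphere `S_p` of `ℓ^p(μ)`. -/
def pSphere (μ : V → ℝ) (p : ℝ) : Set (V → ℝ) :=
  {f | ∑ i : V, μ i * |f i| ^ p = 1}

/-- There is an odd continuous map from `B` into `ℝ^m ∖ {0}`. -/
def hasOddMapInto (B : Set (V → ℝ)) (m : ℕ) : Prop :=
  ∃ h : (V → ℝ) → (Fin m → ℝ),
    ContinuousOn h B ∧ (∀ x ∈ B, h x ≠ 0) ∧ (∀ x ∈ B, h (-x) = -(h x))

/-- The Krasnoselskii genus of `B` is at least `k`. -/
def genusGe (B : Set (V → ℝ)) (k : ℕ) : Prop :=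
  ∀ m, m < k → ¬ hasOddMapInto B m

/-- The family `F_k(S_p)` of closed symmetric subsets of the sphere `S_p`
with Krasnoselskii genus at least `k`. -/
def genusFamily (μ : V → ℝ) (p : ℝ) (k : ℕ) : Set (Set (V → ℝ)) :=
  {B | B ⊆ pSphere μ p ∧ IsClosed B ∧ (∀ x ∈ B, -x ∈ B) ∧ genusGe B k}

/-- The `k`-th variational eigenvalue `λ_k^{(p)}` of the signed graph `p`-Laplacian. -/
def varEig (G : SimpleGraph V) (w sgn : V → V → ℝ) (μ κ : V → ℝ)
    (p : ℝ) (k : ℕ) : ℝ :=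
  sInf ((fun B => sSup (sgRayleigh G w sgn μ κ p '' B)) '' genusFamily μ p k)

/-- The `k`-th smallest real root (1-indexed, counted with multiplicity) of the
characteristic polynomial of `A`; for a matrix with real spectrum this is the
`k`-th eigenvalue `λ_k(A)` in the ordering `λ_1 ≤ … ≤ λ_n`. -/
def eigval {m : Type} [Fintype m] [DecidableEq m] (A : Matrix m m ℝ) (k : ℕ) : ℝ :=
  (Multiset.sort A.charpoly.roots (· ≤ ·)).getD (k - 1) 0

/-- The normalized adjacency matrix `A^μ_{-Γ}` of the negation of the signed graph
`(H, sgn)` with edge weight `w` and vertex measure `μ`. -/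
def negAdj (H : SimpleGraph V) (w sgn : V → V → ℝ) (μ : V → ℝ) : Matrix V V ℝ :=
  fun i j => if H.Adj i j then -(sgn i j) * w i j / μ i else 0

/-- The normalized adjacency matrix `A^μ_{-Γ₀}` of the negation of the subgraph of
`(H, sgn)` with vertex set `s`, with restricted edge weight and vertex measure. -/
def negAdjSub (H : SimpleGraph V) (s : Finset V) (w sgn : V → V → ℝ) (μ : V → ℝ) :
    Matrix {x // x ∈ s} {x // x ∈ s} ℝ :=
  fun i j => if H.Adj ↑i ↑j then -(sgn ↑i ↑j) * w ↑i ↑j / μ ↑i else 0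

/-- The subgraph of `G` induced on the vertex set `s`. -/
def inducedGraph (G : SimpleGraph V) (s : Finset V) : SimpleGraph {x // x ∈ s} where
  Adj i j := G.Adj ↑i ↑j
  symm := ⟨fun _ _ h => G.symm.symm _ _ h⟩
  loopless := ⟨fun i h => G.loopless.irrefl ↑i h⟩

/-- `G` has an edge cover of cardinality `m`. -/
def edgeCoverCard {α : Type} (G : SimpleGraph α) (m : ℕ) : Prop :=
  ∃ C : Finset (Sym2 α), (C : Set (Sym2 α)) ⊆ G.edgeSet ∧
    (∀ v : α, ∃ e ∈ C, v ∈ e) ∧ C.card = m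

/-- The componentwise map `φ_{q,p} : S_q → S_p`, `φ_{q,p}(f)(i) = |f(i)|^{q/p} sign(f(i))`. -/
def phiMap (q p : ℝ) (f : V → ℝ) : V → ℝ :=
  fun i => |f i| ^ (q / p) * Real.sign (f i)

namespace RayMono


/-- signed power -/
def phi (α t : ℝ) : ℝ := |t| ^ α * Real.sign t

lemma phi_neg (α t : ℝ) : phi α (-t) = - phi α t := by
  simp [phi, Real.sign_neg, abs_neg, mul_neg]

lemma phi_of_nonneg {α : ℝ} (hα : 0 < α) {t : ℝ} (ht : 0 ≤ t) : phi α t = t ^ α := by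
  rcases ht.eq_or_lt with rfl | ht'
  · simp [phi, Real.sign_zero, Real.zero_rpow hα.ne']
  · rw [phi, Real.sign_of_pos ht', abs_of_pos ht', mul_one]

lemma abs_phi {α : ℝ} (hα : 0 < α) (t : ℝ) : |phi α t| = |t| ^ α := by
  rcases lt_trichotomy t 0 with h | rfl | h
  · rw [phi, Real.sign_of_neg h, mul_neg_one, abs_neg, abs_of_nonneg (Real.rpow_nonneg (abs_nonneg t) α)]
  · simp [phi, Real.sign_zero, Real.zero_rpow hα.ne']
  · rw [phi, Real.sign_of_pos h, mul_one, abs_of_nonneg (Real.rpow_nonneg (abs_nonneg t) α)]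

lemma phi_sign_mul {α : ℝ} (s t : ℝ) (hs : s = 1 ∨ s = -1) : phi α (s * t) = s * phi α t := by
  rcases hs with rfl | rfl
  · simp
  · simp [neg_one_mul, phi_neg]

/-- two-point convexity of rpow -/
lemma cv {r : ℝ} (hr : 1 ≤ r) {a b : ℝ} (ha : 0 ≤ a) (hb : 0 ≤ b) :
    ((a + b) / 2) ^ r ≤ (a ^ r + b ^ r) / 2 := by
  have h := (convexOn_rpow hr).2 (Set.mem_Ici.2 ha) (Set.mem_Ici.2 hb)
    (by norm_num : (0:ℝ) ≤ 1/2) (by norm_num : (0:ℝ) ≤ 1/2) (by norm_num : (1/2:ℝ) + 1/2 = 1)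
  simp only [smul_eq_mul] at h
  have e1 : (1/2:ℝ) * a + (1/2) * b = (a + b) / 2 := by ring
  rw [e1] at h
  linarith

/-- superadditivity of rpow -/
lemma superadd {r a b : ℝ} (hr : 1 ≤ r) (ha : 0 ≤ a) (hb : 0 ≤ b) :
    a ^ r + b ^ r ≤ (a + b) ^ r := by
  have h := NNReal.add_rpow_le_rpow_add (⟨a, ha⟩ : NNReal) (⟨b, hb⟩ : NNReal) hr
  have h2 := NNReal.coe_le_coe.2 h
  exact h2

/-- tangent line inequality for convex rpow -/
lemma tangent {β x y : ℝ} (hβ : 1 ≤ β) (hx : 0 < x) (hy : 0 ≤ y) (hyx : y ≤ x) :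
    x ^ β - y ^ β ≤ β * x ^ (β - 1) * (x - y) := by
  have hs : -1 ≤ (y - x) / x := by
    rw [le_div_iff₀ hx]; linarith
  have hb := one_add_mul_self_le_rpow_one_add hs hβ
  have h1 : 1 + (y - x)/x = y / x := by field_simp; ring
  rw [h1, Real.div_rpow hy hx.le] at hb
  have hxβ : 0 < x ^ β := Real.rpow_pos_of_pos hx β
  have h2 : x ^ β * (1 + β * ((y - x)/x)) ≤ x ^ β * (y ^ β / x ^ β) := by
    exact mul_le_mul_of_nonneg_left hb hxβ.le
  rw [mul_div_cancel₀ _ hxβ.ne'] at h2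
  have h3 : x ^ β * (1 + β * ((y - x)/x)) = x ^ β + β * (x ^ β / x) * (y - x) := by
    field_simp
  rw [h3, ← Real.rpow_sub_one hx.ne'] at h2
  nlinarith [h2]

lemma S2 {α : ℝ} (hα : 2 ≤ α) {y x : ℝ} (hy : 0 ≤ y) (hyx : y ≤ x) :
    x ^ α - y ^ α ≤ α * ((x - y) * ((x ^ (α-1) + y ^ (α-1)) / 2)) := by
  have hβ1 : (1:ℝ) ≤ α - 1 := by linarith
  have hα0 : (0:ℝ) < α := by linarith
  set F : ℝ → ℝ := fun z => α * ((z - y) * ((z ^ (α-1) + y ^ (α-1))/2)) - z ^ α with hF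
  have hderiv : ∀ z ∈ interior (Set.Ici y), HasDerivAt F
      (α * ((z ^ (α-1) + y ^ (α-1))/2) + α*(z-y)*((α-1) * z ^ (α-1-1) /2) - α * z ^ (α - 1)) z := by
    intro z hz
    rw [interior_Ici] at hz
    have hz0 : 0 < z := lt_of_le_of_lt hy hz
    have h1 : HasDerivAt (fun z:ℝ => z ^ (α-1)) ((α-1) * z ^ (α-1-1)) z :=
      Real.hasDerivAt_rpow_const (Or.inl hz0.ne')
    have h2 : HasDerivAt (fun z:ℝ => z ^ α) (α * z ^ (α-1)) z :=
      Real.hasDerivAt_rpow_const (Or.inl hz0.ne')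
    have h3 : HasDerivAt (fun z:ℝ => (z ^ (α-1) + y ^ (α-1))/2) ((α-1) * z ^ (α-1-1)/2) z :=
      (h1.add_const _).div_const 2
    have h4 : HasDerivAt (fun z:ℝ => z - y) 1 z := (hasDerivAt_id z).sub_const y
    have h5 := ((h4.mul h3).const_mul α).sub h2
    exact h5.congr_deriv (by ring)
  have key : F y ≤ F x := by
    apply monotoneOn_of_deriv_nonneg (convex_Ici y) _ _ _ Set.self_mem_Ici (Set.mem_Ici.2 hyx) hyx
    · have c1 : Continuous fun z:ℝ => z ^ (α-1) := Real.continuous_rpow_const (by linarith)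
      have c2 : Continuous fun z:ℝ => z ^ α := Real.continuous_rpow_const (by linarith)
      have c3 : Continuous fun z:ℝ => z - y := continuous_id.sub continuous_const
      have c4 : Continuous fun z:ℝ => (z ^ (α-1) + y ^ (α-1))/2 := (c1.add continuous_const).div_const 2
      exact ((continuous_const.mul (c3.mul c4)).sub c2).continuousOn
    · intro z hz
      exact ((hderiv z hz).differentiableAt).differentiableWithinAt
    · intro z hz
      rw [(hderiv z hz).deriv]
      rw [interior_Ici] at hz
      have hz0 : 0 < z := lt_of_le_of_lt hy hz
      have ht := tangent hβ1 hz0 hy (le_of_lt hz)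
      have h6 : α * (z^(α-1) - y^(α-1)) ≤ α * ((α-1) * z^(α-1-1) * (z - y)) :=
        mul_le_mul_of_nonneg_left ht hα0.le
      nlinarith [h6]
  have hFy : F y = - y ^ α := by simp [hF]
  have hFx : F x = α * ((x - y) * ((x ^ (α-1) + y ^ (α-1))/2)) - x ^ α := rfl
  rw [hFy, hFx] at key
  linarith

lemma S1 {α : ℝ} (hα1 : 1 < α) (hα2 : α ≤ 2) {y x : ℝ} (hy : 0 ≤ y) (hyx : y ≤ x) :
    x ^ α - y ^ α ≤ α * ((x - y) * (((x + y)/2) ^ (α-1))) := by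
  have hβ0 : (0:ℝ) < α - 1 := by linarith
  have hβ1 : α - 1 ≤ 1 := by linarith
  have hα0 : (0:ℝ) < α := by linarith
  set F : ℝ → ℝ := fun z => α * ((z - y) * (((z + y)/2) ^ (α-1))) - z ^ α with hF
  have hderiv : ∀ z ∈ interior (Set.Ici y), HasDerivAt F
      (α * (((z + y)/2) ^ (α-1)) + α*(z-y)*((α-1) * ((z+y)/2) ^ (α-1-1) * (1/2)) - α * z ^ (α - 1)) z := by
    intro z hz
    rw [interior_Ici] at hz
    have hz0 : 0 < z := lt_of_le_of_lt hy hz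
    have hm0 : 0 < (z + y)/2 := by linarith
    have hm1 : HasDerivAt (fun z:ℝ => (z + y)/2) (1/2) z :=
      ((hasDerivAt_id z).add_const y).div_const 2
    have h1 := hm1.rpow_const (p := α - 1) (Or.inl hm0.ne')
    have h2 : HasDerivAt (fun z:ℝ => z ^ α) (α * z ^ (α-1)) z :=
      Real.hasDerivAt_rpow_const (Or.inl hz0.ne')
    have h4 : HasDerivAt (fun z:ℝ => z - y) 1 z := (hasDerivAt_id z).sub_const y
    have h5 := ((h4.mul h1).const_mul α).sub h2
    exact h5.congr_deriv (by ring)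
  have key : F y ≤ F x := by
    apply monotoneOn_of_deriv_nonneg (convex_Ici y) _ _ _ Set.self_mem_Ici (Set.mem_Ici.2 hyx) hyx
    · have c0 : Continuous fun z:ℝ => (z+y)/2 := (continuous_id.add continuous_const).div_const 2
      have c1 : Continuous fun z:ℝ => ((z+y)/2) ^ (α-1) :=
        (Real.continuous_rpow_const hβ0.le).comp c0
      have c2 : Continuous fun z:ℝ => z ^ α := Real.continuous_rpow_const (by linarith)
      have c3 : Continuous fun z:ℝ => z - y := continuous_id.sub continuous_const
      exact ((continuous_const.mul (c3.mul c1)).sub c2).continuousOn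
    · intro z hz
      exact ((hderiv z hz).differentiableAt).differentiableWithinAt
    · intro z hz
      rw [(hderiv z hz).deriv]
      rw [interior_Ici] at hz
      have hz0 : 0 < z := lt_of_le_of_lt hy hz
      set m : ℝ := (z + y)/2 with hm
      have hm0 : 0 < m := by rw [hm]; linarith
      set d : ℝ := (z - y)/2 with hd
      have hd0 : 0 ≤ d := by rw [hd]; linarith [show y < z from hz]
      have hs0 : 0 ≤ d / m := div_nonneg hd0 hm0.le
      have hb := rpow_one_add_le_one_add_mul_self (by linarith : (-1:ℝ) ≤ d/m) hβ0.le hβ1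
      have h1 : 1 + d/m = z / m := by rw [hd, hm]; field_simp; ring
      rw [h1, Real.div_rpow hz0.le hm0.le] at hb
      -- hb : (z/m)^(α-1) ≤ 1 + (α-1) * (d/m)
      have hmβ : 0 < m ^ (α-1) := Real.rpow_pos_of_pos hm0 _
      have h2 : m ^ (α-1) * (z ^ (α-1) / m ^ (α-1)) ≤ m ^ (α-1) * (1 + (α-1) * (d/m)) :=
        mul_le_mul_of_nonneg_left hb hmβ.le
      rw [mul_div_cancel₀ _ hmβ.ne'] at h2
      have h3 : m ^ (α-1) * (1 + (α-1) * (d/m)) = m ^ (α-1) + (α-1) * d * (m ^ (α-1) / m) := by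
        field_simp
      rw [h3, ← Real.rpow_sub_one hm0.ne'] at h2
      -- h2 : z ^ (α-1) ≤ m ^ (α-1) + (α-1) * d * m ^ (α-1-1)
      have h6 : α * (z ^ (α-1)) ≤ α * (m ^ (α-1) + (α-1) * d * m ^ (α-1-1)) :=
        mul_le_mul_of_nonneg_left h2 hα0.le
      have hzy : z - y = 2 * d := by rw [hd]; ring
      rw [hzy]
      nlinarith [h6]
  have hFy : F y = - y ^ α := by simp [hF]
  have hFx : F x = α * ((x - y) * (((x+y)/2) ^ (α-1))) - x ^ α := rfl
  rw [hFy, hFx] at key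
  linarith

lemma two_rpow_le {α q : ℝ} (hα : 1 ≤ α) (hq : α ≤ q) : (2:ℝ) ^ ((α-1)/q) ≤ α := by
  have hα0 : (0:ℝ) < α := by linarith
  have hq0 : (0:ℝ) < q := by linarith
  have l2 : Real.log 2 ≤ 1 := by
    have := Real.log_le_sub_one_of_pos (by norm_num : (0:ℝ) < 2); linarith
  have l2' : (0:ℝ) ≤ Real.log 2 := Real.log_nonneg (by norm_num)
  have key : 1 - 1/α ≤ Real.log α := by
    have h := Real.log_le_sub_one_of_pos (show (0:ℝ) < α⁻¹ by positivity)
    rw [Real.log_inv] at h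
    have : α⁻¹ = 1/α := by rw [one_div]
    linarith [h, this ▸ h]
  have h1 : (α-1)/q * Real.log 2 ≤ (α-1)/q := by
    have h0 : 0 ≤ (α-1)/q := div_nonneg (by linarith) hq0.le
    nlinarith
  have h2 : (α-1)/q ≤ (α-1)/α := by
    apply div_le_div_of_nonneg_left (by linarith) hα0 hq
  have h3 : (α-1)/α = 1 - 1/α := by field_simp
  have h4 : (α-1)/q * Real.log 2 ≤ Real.log α := by linarith
  calc (2:ℝ) ^ ((α-1)/q) = Real.exp ((α-1)/q * Real.log 2) := by
        rw [Real.rpow_def_of_pos (by norm_num : (0:ℝ) < 2)]; ring_nf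
    _ ≤ Real.exp (Real.log α) := Real.exp_le_exp.2 h4
    _ = α := Real.exp_log hα0

/-- same-sign core -/
lemma core1 {α q a b : ℝ} (hα : 1 ≤ α) (hq : α ≤ q) (hb : 0 ≤ b) (hba : b ≤ a) :
    a ^ α - b ^ α ≤ α * ((a ^ q + b ^ q) / 2) ^ ((α - 1)/q) * (a - b) := by
  have ha : 0 ≤ a := hb.trans hba
  have hq1 : (1:ℝ) ≤ q := hα.trans hq
  have hq0 : (0:ℝ) < q := by linarith
  have hC : 0 ≤ (a ^ q + b ^ q) / 2 := by positivity
  rcases eq_or_lt_of_le hα with rfl | hα1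
  · simp only [Real.rpow_one, sub_self, zero_div, Real.rpow_zero, one_mul, mul_one]
    linarith
  rcases le_or_gt α 2 with h2 | h2
  · have hS := S1 hα1 h2 hb hba
    have hPM : ((a + b)/2) ^ (α - 1) ≤ ((a ^ q + b ^ q) / 2) ^ ((α - 1)/q) := by
      have hcv : ((a + b)/2) ^ q ≤ (a ^ q + b ^ q)/2 := cv hq1 ha hb
      have hab2 : 0 ≤ (a+b)/2 := by linarith
      have e1 : ((a + b)/2) ^ (α - 1) = (((a + b)/2) ^ q) ^ ((α-1)/q) := by
        rw [← Real.rpow_mul hab2]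
        congr 1
        field_simp
      rw [e1]
      exact Real.rpow_le_rpow (Real.rpow_nonneg hab2 q) hcv (div_nonneg (by linarith) hq0.le)
    calc a ^ α - b ^ α ≤ α * ((a - b) * (((a + b)/2) ^ (α-1))) := hS
      _ ≤ α * ((a - b) * (((a ^ q + b ^ q) / 2) ^ ((α - 1)/q))) := by
          apply mul_le_mul_of_nonneg_left _ (by linarith)
          exact mul_le_mul_of_nonneg_left hPM (by linarith)
      _ = α * ((a ^ q + b ^ q) / 2) ^ ((α - 1)/q) * (a - b) := by ring
  · have hS := S2 h2.le hb hba
    have hβ0 : (0:ℝ) < α - 1 := by linarith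
    have hPM : (a ^ (α-1) + b ^ (α-1))/2 ≤ ((a ^ q + b ^ q) / 2) ^ ((α - 1)/q) := by
      have hr1 : (1:ℝ) ≤ q / (α-1) := by
        rw [le_div_iff₀ hβ0]; linarith
      have hcv := cv hr1 (Real.rpow_nonneg ha (α-1)) (Real.rpow_nonneg hb (α-1))
      have ea : (a ^ (α-1)) ^ (q/(α-1)) = a ^ q := by
        rw [← Real.rpow_mul ha]; congr 1; field_simp
      have eb : (b ^ (α-1)) ^ (q/(α-1)) = b ^ q := by
        rw [← Real.rpow_mul hb]; congr 1; field_simp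
      rw [ea, eb] at hcv
      have hX : 0 ≤ (a ^ (α-1) + b ^ (α-1))/2 := by
        positivity
      have eX : (a ^ (α-1) + b ^ (α-1))/2
          = (((a ^ (α-1) + b ^ (α-1))/2) ^ (q/(α-1))) ^ ((α-1)/q) := by
        rw [← Real.rpow_mul hX]
        rw [show q/(α-1) * ((α-1)/q) = 1 by field_simp, Real.rpow_one]
      rw [eX]
      exact Real.rpow_le_rpow (Real.rpow_nonneg hX _) hcv (by positivity)
    calc a ^ α - b ^ α ≤ α * ((a - b) * ((a ^ (α-1) + b ^ (α-1))/2)) := hS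
      _ ≤ α * ((a - b) * (((a ^ q + b ^ q) / 2) ^ ((α - 1)/q))) := by
          apply mul_le_mul_of_nonneg_left _ (by linarith)
          exact mul_le_mul_of_nonneg_left hPM (by linarith)
      _ = α * ((a ^ q + b ^ q) / 2) ^ ((α - 1)/q) * (a - b) := by ring

/-- opposite-sign core -/
lemma core2 {α q a b : ℝ} (hα : 1 ≤ α) (hq : α ≤ q) (ha : 0 ≤ a) (hb : 0 ≤ b) :
    a ^ α + b ^ α ≤ α * ((a ^ q + b ^ q) / 2) ^ ((α - 1)/q) * (a + b) := by
  have hα0 : (0:ℝ) < α := by linarith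
  have hq0 : (0:ℝ) < q := by linarith
  rcases eq_or_lt_of_le (show (0:ℝ) ≤ max a b from le_max_of_le_left ha) with hM | hM
  · have ha0 : a = 0 := le_antisymm (le_trans (le_max_left a b) (le_of_eq hM.symm)) ha
    have hb0 : b = 0 := le_antisymm (le_trans (le_max_right a b) (le_of_eq hM.symm)) hb
    rw [ha0, hb0]
    simp [Real.zero_rpow hα0.ne', Real.zero_rpow hq0.ne']
  · -- M := max a b > 0
    set M := max a b with hMdef
    have hMa : a ≤ M := le_max_left a b
    have hMb : b ≤ M := le_max_right a b
    have haM : a ^ α ≤ M ^ (α-1) * a := by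
      rcases ha.eq_or_lt with rfl | ha'
      · rw [Real.zero_rpow hα0.ne', mul_zero]
      · have e1 : a ^ α = a ^ (α-1) * a := by
          rw [← Real.rpow_add_one ha'.ne' (α-1)]; ring_nf
        rw [e1]
        exact mul_le_mul_of_nonneg_right (Real.rpow_le_rpow ha hMa (by linarith)) ha
    have hbM : b ^ α ≤ M ^ (α-1) * b := by
      rcases hb.eq_or_lt with rfl | hb'
      · rw [Real.zero_rpow hα0.ne', mul_zero]
      · have e1 : b ^ α = b ^ (α-1) * b := by
          rw [← Real.rpow_add_one hb'.ne' (α-1)]; ring_nf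
        rw [e1]
        exact mul_le_mul_of_nonneg_right (Real.rpow_le_rpow hb hMb (by linarith)) hb
    have hCnn : 0 ≤ (a ^ q + b ^ q)/2 :=
      div_nonneg (add_nonneg (Real.rpow_nonneg ha q) (Real.rpow_nonneg hb q)) (by norm_num)
    have hMq : M ^ q ≤ a ^ q + b ^ q := by
      rcases max_cases a b with ⟨hM1, _⟩ | ⟨hM1, _⟩ <;> rw [hMdef, hM1]
      · nlinarith [Real.rpow_nonneg hb q]
      · nlinarith [Real.rpow_nonneg ha q]
    have h2 : M ^ (α-1) ≤ α * ((a ^ q + b ^ q)/2) ^ ((α-1)/q) := by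
      have e1 : M ^ (α-1) = (M ^ q) ^ ((α-1)/q) := by
        rw [← Real.rpow_mul hM.le]; congr 1; field_simp
      have e2 : (M ^ q) ^ ((α-1)/q) ≤ (a ^ q + b ^ q) ^ ((α-1)/q) :=
        Real.rpow_le_rpow (Real.rpow_nonneg hM.le q) hMq (div_nonneg (by linarith) hq0.le)
      have e3 : (a ^ q + b ^ q) ^ ((α-1)/q)
          = 2 ^ ((α-1)/q) * ((a ^ q + b ^ q)/2) ^ ((α-1)/q) := by
        rw [← Real.mul_rpow (by norm_num) hCnn]
        congr 1; ring
      have e4 : (2:ℝ) ^ ((α-1)/q) * ((a ^ q + b ^ q)/2) ^ ((α-1)/q)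
          ≤ α * ((a ^ q + b ^ q)/2) ^ ((α-1)/q) :=
        mul_le_mul_of_nonneg_right (two_rpow_le hα hq) (Real.rpow_nonneg hCnn _)
      rw [e1]
      exact le_trans e2 (le_trans (le_of_eq e3) e4)
    calc a ^ α + b ^ α ≤ M ^ (α-1) * a + M ^ (α-1) * b := add_le_add haM hbM
      _ = M ^ (α-1) * (a + b) := by ring
      _ ≤ (α * ((a ^ q + b ^ q)/2) ^ ((α-1)/q)) * (a + b) :=
          mul_le_mul_of_nonneg_right h2 (by linarith)
      _ = α * ((a ^ q + b ^ q) / 2) ^ ((α - 1)/q) * (a + b) := by ring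

/-- the main pointwise inequality, ordered version -/
lemma key2' {α q : ℝ} (hα : 1 ≤ α) (hq : α ≤ q) {x y : ℝ} (hyx : y ≤ x) :
    |phi α x - phi α y| ≤ α * ((|x| ^ q + |y| ^ q)/2) ^ ((α-1)/q) * |x - y| := by
  have hα0 : (0:ℝ) < α := by linarith
  rcases le_or_gt 0 y with hy | hy
  · have hx : 0 ≤ x := hy.trans hyx
    rw [phi_of_nonneg hα0 hy, phi_of_nonneg hα0 hx, abs_of_nonneg hx, abs_of_nonneg hy,
      abs_of_nonneg (sub_nonneg.2 hyx),
      abs_of_nonneg (sub_nonneg.2 (Real.rpow_le_rpow hy hyx hα0.le))]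
    exact core1 hα hq hy hyx
  · rcases le_or_gt 0 x with hx | hx
    · have ey : phi α y = - ((-y) ^ α) := by
        have h1 := phi_neg α (-y)
        rw [neg_neg] at h1
        rw [h1, phi_of_nonneg hα0 (by linarith : (0:ℝ) ≤ -y)]
      rw [phi_of_nonneg hα0 hx, ey, abs_of_nonneg hx, abs_of_neg hy,
        abs_of_nonneg (by linarith : (0:ℝ) ≤ x - y), sub_neg_eq_add,
        abs_of_nonneg (add_nonneg (Real.rpow_nonneg hx α) (Real.rpow_nonneg (by linarith : (0:ℝ) ≤ -y) α))]
      have h := core2 hα hq hx (by linarith : (0:ℝ) ≤ -y)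
      calc x ^ α + (-y) ^ α ≤ α * ((x ^ q + (-y) ^ q) / 2) ^ ((α - 1)/q) * (x + -y) := h
        _ = α * ((x ^ q + (-y) ^ q) / 2) ^ ((α - 1)/q) * (x - y) := by ring
    · have ex : phi α x = - ((-x) ^ α) := by
        have h1 := phi_neg α (-x)
        rw [neg_neg] at h1
        rw [h1, phi_of_nonneg hα0 (by linarith : (0:ℝ) ≤ -x)]
      have ey : phi α y = - ((-y) ^ α) := by
        have h1 := phi_neg α (-y)
        rw [neg_neg] at h1
        rw [h1, phi_of_nonneg hα0 (by linarith : (0:ℝ) ≤ -y)]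
      have hxy' : (0:ℝ) ≤ -x := by linarith
      have hxy'' : -x ≤ -y := by linarith
      have h := core1 hα hq hxy' hxy''
      have e2 : |phi α x - phi α y| = (-y) ^ α - (-x) ^ α := by
        rw [ex, ey]
        rw [show -((-x) ^ α) - -((-y) ^ α) = (-y) ^ α - (-x) ^ α by ring]
        exact abs_of_nonneg (sub_nonneg.2 (Real.rpow_le_rpow hxy' hxy'' hα0.le))
      rw [e2, abs_of_neg hx, abs_of_neg hy, abs_of_nonneg (by linarith : (0:ℝ) ≤ x - y)]
      calc (-y) ^ α - (-x) ^ α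
          ≤ α * (((-y) ^ q + (-x) ^ q) / 2) ^ ((α - 1)/q) * (-y - -x) := h
        _ = α * (((-x) ^ q + (-y) ^ q) / 2) ^ ((α - 1)/q) * (x - y) := by
            rw [add_comm ((-y) ^ q)]; ring

/-- the main pointwise inequality -/
lemma key2 {α q : ℝ} (hα : 1 ≤ α) (hq : α ≤ q) (x y : ℝ) :
    |phi α x - phi α y| ≤ α * ((|x| ^ q + |y| ^ q)/2) ^ ((α-1)/q) * |x - y| := by
  rcases le_total y x with h | h
  · exact key2' hα hq h
  · have hk := key2' hα hq h
    rw [abs_sub_comm (phi α y), abs_sub_comm y x, add_comm (|y| ^ q)] at hk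
    exact hk

/-- part-1 cores -/
lemma core1A {α a b : ℝ} (hα : 1 ≤ α) (hb : 0 ≤ b) (hba : b ≤ a) :
    (a - b) ^ α ≤ 2 ^ (α - 1) * (a ^ α - b ^ α) := by
  have hsa := superadd hα (sub_nonneg.2 hba) hb
  rw [sub_add_cancel] at hsa
  have h1 : (1:ℝ) ≤ 2 ^ (α - 1) := Real.one_le_rpow one_le_two (by linarith)
  have h2 : 0 ≤ a ^ α - b ^ α := by
    have := Real.rpow_le_rpow hb hba (by linarith : (0:ℝ) ≤ α)
    linarith
  nlinarith

lemma core2A {α a b : ℝ} (hα : 1 ≤ α) (ha : 0 ≤ a) (hb : 0 ≤ b) :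
    (a + b) ^ α ≤ 2 ^ (α - 1) * (a ^ α + b ^ α) := by
  have hcv := cv hα ha hb
  have e1 : (a + b) ^ α = 2 ^ α * ((a + b)/2) ^ α := by
    rw [← Real.mul_rpow (by norm_num) (by linarith)]
    congr 1; ring
  have e2 : (2:ℝ) ^ (α - 1) = 2 ^ α / 2 := Real.rpow_sub_one (by norm_num) α
  have h2 : (0:ℝ) < 2 ^ α := Real.rpow_pos_of_pos (by norm_num) α
  rw [e1, e2]
  calc 2 ^ α * ((a + b)/2) ^ α ≤ 2 ^ α * ((a ^ α + b ^ α)/2) :=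
        mul_le_mul_of_nonneg_left hcv h2.le
    _ = 2 ^ α / 2 * (a ^ α + b ^ α) := by ring

lemma A0' {α : ℝ} (hα : 1 ≤ α) {x y : ℝ} (hyx : y ≤ x) :
    |x - y| ^ α ≤ 2 ^ (α - 1) * |phi α x - phi α y| := by
  have hα0 : (0:ℝ) < α := by linarith
  rcases le_or_gt 0 y with hy | hy
  · have hx : 0 ≤ x := hy.trans hyx
    rw [phi_of_nonneg hα0 hy, phi_of_nonneg hα0 hx,
      abs_of_nonneg (sub_nonneg.2 hyx),
      abs_of_nonneg (sub_nonneg.2 (Real.rpow_le_rpow hy hyx hα0.le))]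
    exact core1A hα hy hyx
  · rcases le_or_gt 0 x with hx | hx
    · have ey : phi α y = - ((-y) ^ α) := by
        have h1 := phi_neg α (-y)
        rw [neg_neg] at h1
        rw [h1, phi_of_nonneg hα0 (by linarith : (0:ℝ) ≤ -y)]
      rw [phi_of_nonneg hα0 hx, ey, abs_of_nonneg (by linarith : (0:ℝ) ≤ x - y),
        sub_neg_eq_add,
        abs_of_nonneg (add_nonneg (Real.rpow_nonneg hx α) (Real.rpow_nonneg (by linarith : (0:ℝ) ≤ -y) α))]
      have h := core2A hα hx (by linarith : (0:ℝ) ≤ -y)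
      calc (x - y) ^ α = (x + -y) ^ α := by ring_nf
        _ ≤ 2 ^ (α - 1) * (x ^ α + (-y) ^ α) := h
    · have ex : phi α x = - ((-x) ^ α) := by
        have h1 := phi_neg α (-x)
        rw [neg_neg] at h1
        rw [h1, phi_of_nonneg hα0 (by linarith : (0:ℝ) ≤ -x)]
      have ey : phi α y = - ((-y) ^ α) := by
        have h1 := phi_neg α (-y)
        rw [neg_neg] at h1
        rw [h1, phi_of_nonneg hα0 (by linarith : (0:ℝ) ≤ -y)]
      have hxy' : (0:ℝ) ≤ -x := by linarith
      have hxy'' : -x ≤ -y := by linarith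
      have h := core1A hα hxy' hxy''
      have e2 : |phi α x - phi α y| = (-y) ^ α - (-x) ^ α := by
        rw [ex, ey]
        rw [show -((-x) ^ α) - -((-y) ^ α) = (-y) ^ α - (-x) ^ α by ring]
        exact abs_of_nonneg (sub_nonneg.2 (Real.rpow_le_rpow hxy' hxy'' hα0.le))
      rw [e2, abs_of_nonneg (by linarith : (0:ℝ) ≤ x - y)]
      calc (x - y) ^ α = (-y - -x) ^ α := by ring_nf
        _ ≤ 2 ^ (α - 1) * ((-y) ^ α - (-x) ^ α) := h

lemma A0 {α : ℝ} (hα : 1 ≤ α) (x y : ℝ) :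
    |x - y| ^ α ≤ 2 ^ (α - 1) * |phi α x - phi α y| := by
  rcases le_total y x with h | h
  · exact A0' hα h
  · have hk := A0' hα h
    rw [abs_sub_comm (phi α y), abs_sub_comm y x] at hk
    exact hk

/-- part-1 pointwise inequality in final form -/
lemma keyA {p q : ℝ} (hp : 1 ≤ p) (hpq : p ≤ q) (x y : ℝ) :
    |x - y| ^ q ≤ 2 ^ (q - p) * |phi (q/p) x - phi (q/p) y| ^ p := by
  have hp0 : (0:ℝ) < p := by linarith
  have hα : 1 ≤ q/p := (one_le_div hp0).2 hpq
  have h := A0 hα x y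
  have h1 : (|x - y| ^ (q/p)) ^ p ≤ (2 ^ (q/p - 1) * |phi (q/p) x - phi (q/p) y|) ^ p :=
    Real.rpow_le_rpow (Real.rpow_nonneg (abs_nonneg _) _) h hp0.le
  rw [← Real.rpow_mul (abs_nonneg _), div_mul_cancel₀ q hp0.ne'] at h1
  rw [Real.mul_rpow (Real.rpow_nonneg (by norm_num) _) (abs_nonneg _),
    ← Real.rpow_mul (by norm_num : (0:ℝ) ≤ 2)] at h1
  rw [show (q/p - 1) * p = q - p by field_simp] at h1
  exact h1

/-- part-2 pointwise inequality in final form -/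
lemma keyB {p q : ℝ} (hp : 1 ≤ p) (hpq : p ≤ q) (x y : ℝ) :
    |phi (q/p) x - phi (q/p) y| ^ p ≤
      (q/p) ^ p * (((|x| ^ q + |y| ^ q)/2) ^ (1 - p/q) * (|x - y| ^ q) ^ (p/q)) := by
  have hp0 : (0:ℝ) < p := by linarith
  have hq0 : (0:ℝ) < q := by linarith
  have hα : 1 ≤ q/p := (one_le_div hp0).2 hpq
  have hαq : q/p ≤ q := by
    rw [div_le_iff₀ hp0]; nlinarith
  have hCnn : 0 ≤ (|x| ^ q + |y| ^ q)/2 :=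
    div_nonneg (add_nonneg (Real.rpow_nonneg (abs_nonneg x) q) (Real.rpow_nonneg (abs_nonneg y) q))
      (by norm_num)
  have h := key2 hα hαq x y
  have h1 : |phi (q/p) x - phi (q/p) y| ^ p
      ≤ (q/p * ((|x| ^ q + |y| ^ q)/2) ^ ((q/p - 1)/q) * |x - y|) ^ p :=
    Real.rpow_le_rpow (abs_nonneg _) h hp0.le
  rw [Real.mul_rpow (mul_nonneg (by positivity) (Real.rpow_nonneg hCnn _)) (abs_nonneg _),
    Real.mul_rpow (by positivity) (Real.rpow_nonneg hCnn _),
    ← Real.rpow_mul hCnn] at h1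
  rw [show (q/p - 1)/q * p = 1 - p/q by field_simp] at h1
  rw [show |x - y| ^ p = (|x - y| ^ q) ^ (p/q) by
    rw [← Real.rpow_mul (abs_nonneg _)]
    congr 1
    field_simp] at h1
  calc |phi (q/p) x - phi (q/p) y| ^ p
      ≤ (q/p) ^ p * ((|x| ^ q + |y| ^ q)/2) ^ (1 - p/q) * (|x - y| ^ q) ^ (p/q) := h1
    _ = (q/p) ^ p * (((|x| ^ q + |y| ^ q)/2) ^ (1 - p/q) * (|x - y| ^ q) ^ (p/q)) := by ring

/-- finite Hölder inequality -/
lemma holder {ι : Type*} [Fintype ι] (u v : ι → ℝ) (hu : ∀ i, 0 ≤ u i) (hv : ∀ i, 0 ≤ v i)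
    {t : ℝ} (ht0 : 0 < t) (ht1 : t < 1) :
    ∑ i, (u i) ^ (1 - t) * (v i) ^ t ≤ (∑ i, u i) ^ (1 - t) * (∑ i, v i) ^ t := by
  have h1t : 0 < 1 - t := by linarith
  have hU0 : 0 ≤ ∑ i, u i := Finset.sum_nonneg fun i _ => hu i
  have hV0 : 0 ≤ ∑ i, v i := Finset.sum_nonneg fun i _ => hv i
  rcases hU0.eq_or_lt with hU1 | hU1
  · have hz : ∀ i ∈ (Finset.univ : Finset ι), u i = 0 := by
      intro i _
      exact le_antisymm (hU1 ▸ Finset.single_le_sum (fun j _ => hu j) (Finset.mem_univ i)) (hu i)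
    have hL : ∑ i, (u i) ^ (1 - t) * (v i) ^ t = 0 := by
      apply Finset.sum_eq_zero
      intro i hi
      rw [hz i hi, Real.zero_rpow h1t.ne', zero_mul]
    rw [hL, ← hU1, Real.zero_rpow h1t.ne', zero_mul]
  rcases hV0.eq_or_lt with hV1 | hV1
  · have hz : ∀ i ∈ (Finset.univ : Finset ι), v i = 0 := by
      intro i _
      exact le_antisymm (hV1 ▸ Finset.single_le_sum (fun j _ => hv j) (Finset.mem_univ i)) (hv i)
    have hL : ∑ i, (u i) ^ (1 - t) * (v i) ^ t = 0 := by
      apply Finset.sum_eq_zero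
      intro i hi
      rw [hz i hi, Real.zero_rpow ht0.ne', mul_zero]
    rw [hL, ← hV1, Real.zero_rpow ht0.ne', mul_zero]
  · have hUp : (0:ℝ) < (∑ i, u i) ^ (1-t) := Real.rpow_pos_of_pos hU1 _
    have hVp : (0:ℝ) < (∑ i, v i) ^ t := Real.rpow_pos_of_pos hV1 _
    have key : ∀ i, (u i) ^ (1-t) * (v i) ^ t
        = (∑ j, u j) ^ (1-t) * (∑ j, v j) ^ t * ((u i / ∑ j, u j) ^ (1-t) * (v i / ∑ j, v j) ^ t) := by
      intro i
      rw [Real.div_rpow (hu i) hU0, Real.div_rpow (hv i) hV0]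
      field_simp
    calc ∑ i, (u i) ^ (1-t) * (v i) ^ t
        = ∑ i, (∑ j, u j) ^ (1-t) * (∑ j, v j) ^ t * ((u i / ∑ j, u j) ^ (1-t) * (v i / ∑ j, v j) ^ t) := by
          exact Finset.sum_congr rfl fun i _ => key i
      _ = (∑ j, u j) ^ (1-t) * (∑ j, v j) ^ t * ∑ i, ((u i / ∑ j, u j) ^ (1-t) * (v i / ∑ j, v j) ^ t) := by
          rw [← Finset.mul_sum]
      _ ≤ (∑ j, u j) ^ (1-t) * (∑ j, v j) ^ t * 1 := by
          apply mul_le_mul_of_nonneg_left _ (mul_nonneg hUp.le hVp.le)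
          calc ∑ i, ((u i / ∑ j, u j) ^ (1-t) * (v i / ∑ j, v j) ^ t)
              ≤ ∑ i, ((1-t) * (u i / ∑ j, u j) + t * (v i / ∑ j, v j)) := by
                apply Finset.sum_le_sum
                intro i _
                exact Real.geom_mean_le_arith_mean2_weighted h1t.le ht0.le
                  (div_nonneg (hu i) hU0) (div_nonneg (hv i) hV0) (by ring)
            _ = 1 := by
                rw [Finset.sum_add_distrib, ← Finset.mul_sum, ← Finset.mul_sum,
                  ← Finset.sum_div, ← Finset.sum_div, div_self hU1.ne', div_self hV1.ne']
                ring
      _ = (∑ j, u j) ^ (1-t) * (∑ j, v j) ^ t := mul_one _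



lemma rpow_split {x : ℝ} (hx : 0 ≤ x) (t : ℝ) : x ^ (1 - t) * x ^ t = x := by
  rw [← Real.rpow_add' hx (ne_of_eq_of_ne (by ring : (1 - t) + t = (1:ℝ)) one_ne_zero)]
  rw [show (1 - t) + t = (1:ℝ) by ring, Real.rpow_one]

end RayMono

/-- **Monotonicity of Rayleigh quotients** (Lemma `lemma:RayMonotonicity`).
For a signed graph with nonnegative potential, `1 ≤ p ≤ q` and `f ∈ S_q`,
`2^{-p} R_p^σ(φ_{q,p}(f)) ≥ 2^{-q} R_q^σ(f)` and
`p (R_p^σ(φ_{q,p}(f))/𝒟)^{1/p} ≤ q (R_q^σ(f)/𝒟)^{1/q}`. -/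
theorem rayleigh_monotonicity
    {V : Type} [Fintype V] [DecidableEq V] (n : ℕ) (hn : Fintype.card V = n)
    (G : SimpleGraph V) (w sgn : V → V → ℝ) (μ κ : V → ℝ)
    (hw : ∀ i j, G.Adj i j → 0 < w i j) (hwsymm : ∀ i j, w i j = w j i)
    (hsgn : ∀ i j, G.Adj i j → sgn i j = 1 ∨ sgn i j = -1)
    (hsgnsymm : ∀ i j, sgn i j = sgn j i)
    (hμ : ∀ i, 0 < μ i) (hκ : ∀ i, 0 ≤ κ i)
    (p q : ℝ) (hp : 1 ≤ p) (hpq : p ≤ q)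
    (f : V → ℝ) (hf : f ∈ pSphere μ q) :
    (2 : ℝ) ^ (-q) * sgRayleigh G w sgn μ κ q f ≤
      (2 : ℝ) ^ (-p) * sgRayleigh G w sgn μ κ p (phiMap q p f) ∧
    p * (sgRayleigh G w sgn μ κ p (phiMap q p f) /
        (⨆ i : V, (2 * κ i + ∑ j : V, if G.Adj i j then w i j else 0) / (2 * μ i))) ^ (1 / p)
      ≤ q * (sgRayleigh G w sgn μ κ q f /
        (⨆ i : V, (2 * κ i + ∑ j : V, if G.Adj i j then w i j else 0) / (2 * μ i))) ^ (1 / q) := by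
    classical
  have hq1 : 1 ≤ q := hp.trans hpq
  have hp0 : (0:ℝ) < p := by linarith
  have hq0 : (0:ℝ) < q := by linarith
  have hα1 : 1 ≤ q / p := (one_le_div hp0).2 hpq
  have hα0 : (0:ℝ) < q / p := by linarith
  have hfs : ∑ i : V, μ i * |f i| ^ q = 1 := hf
  have hgphi : ∀ i, phiMap q p f i = RayMono.phi (q/p) (f i) := fun i => rfl
  have habsg : ∀ i, |phiMap q p f i| ^ p = |f i| ^ q := by
    intro i
    rw [hgphi i, RayMono.abs_phi hα0, ← Real.rpow_mul (abs_nonneg _), div_mul_cancel₀ q hp0.ne']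
  have hgden : ∑ i : V, μ i * |phiMap q p f i| ^ p = 1 := by
    calc ∑ i : V, μ i * |phiMap q p f i| ^ p = ∑ i : V, μ i * |f i| ^ q :=
          Finset.sum_congr rfl fun i _ => by rw [habsg i]
      _ = 1 := hfs
  have hσg : ∀ i j, G.Adj i j → phiMap q p f i - sgn i j * phiMap q p f j
      = RayMono.phi (q/p) (f i) - RayMono.phi (q/p) (sgn i j * f j) := by
    intro i j h
    rw [hgphi i, hgphi j, RayMono.phi_sign_mul (sgn i j) (f j) (hsgn i j h)]
  -- numerators
  set Ep := ∑ i : V, ∑ j : V,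
      if G.Adj i j then w i j * |phiMap q p f i - sgn i j * phiMap q p f j| ^ p else 0 with hEp
  set Eq2 := ∑ i : V, ∑ j : V, if G.Adj i j then w i j * |f i - sgn i j * f j| ^ q else 0 with hEq2
  set Kq := ∑ i : V, κ i * |f i| ^ q with hKq
  have hEp_nonneg : 0 ≤ Ep := Finset.sum_nonneg fun i _ => Finset.sum_nonneg fun j _ => by
    split_ifs with h
    · exact mul_nonneg (hw i j h).le (Real.rpow_nonneg (abs_nonneg _) _)
    · exact le_refl 0
  have hEq2_nonneg : 0 ≤ Eq2 := Finset.sum_nonneg fun i _ => Finset.sum_nonneg fun j _ => by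
    split_ifs with h
    · exact mul_nonneg (hw i j h).le (Real.rpow_nonneg (abs_nonneg _) _)
    · exact le_refl 0
  have hKq_nonneg : 0 ≤ Kq := Finset.sum_nonneg fun i _ =>
    mul_nonneg (hκ i) (Real.rpow_nonneg (abs_nonneg _) _)
  have hRq_val : sgRayleigh G w sgn μ κ q f = Eq2 / 2 + Kq := by
    rw [sgRayleigh, hfs, div_one, sgEdgeSum]
  have hRp_val : sgRayleigh G w sgn μ κ p (phiMap q p f) = Ep / 2 + Kq := by
    rw [sgRayleigh, hgden, div_one, sgEdgeSum]
    congr 1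
    calc ∑ i : V, κ i * |phiMap q p f i| ^ p = ∑ i : V, κ i * |f i| ^ q :=
          Finset.sum_congr rfl fun i _ => by rw [habsg i]
      _ = Kq := rfl
  constructor
  · -- Part 1
    rw [hRq_val, hRp_val]
    have h2qp : (1:ℝ) ≤ 2 ^ (q - p) := Real.one_le_rpow one_le_two (by linarith)
    have hE : Eq2 ≤ 2 ^ (q - p) * Ep := by
      rw [Finset.mul_sum]
      apply Finset.sum_le_sum
      intro i _
      rw [Finset.mul_sum]
      apply Finset.sum_le_sum
      intro j _
      by_cases hadj : G.Adj i j
      · simp only [if_pos hadj]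
        have hk := RayMono.keyA hp hpq (f i) (sgn i j * f j)
        rw [← hσg i j hadj] at hk
        calc w i j * |f i - sgn i j * f j| ^ q
            ≤ w i j * (2 ^ (q - p) * |phiMap q p f i - sgn i j * phiMap q p f j| ^ p) :=
              mul_le_mul_of_nonneg_left hk (hw i j hadj).le
          _ = 2 ^ (q - p) * (w i j * |phiMap q p f i - sgn i j * phiMap q p f j| ^ p) := by ring
      · simp [hadj]
    have hK : Kq ≤ 2 ^ (q - p) * Kq := by nlinarith
    have hNum : Eq2 / 2 + Kq ≤ 2 ^ (q - p) * (Ep / 2 + Kq) := by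
      rw [mul_add, ← mul_div_assoc]
      linarith
    have h2 : (2:ℝ) ^ (-q) * (2:ℝ) ^ (q - p) = 2 ^ (-p) := by
      rw [← Real.rpow_add two_pos]; ring_nf
    calc (2:ℝ) ^ (-q) * (Eq2 / 2 + Kq) ≤ 2 ^ (-q) * (2 ^ (q - p) * (Ep / 2 + Kq)) :=
          mul_le_mul_of_nonneg_left hNum (Real.rpow_nonneg (by norm_num) _)
      _ = 2 ^ (-p) * (Ep / 2 + Kq) := by rw [← mul_assoc, h2]
  · -- Part 2
    set D := ⨆ i : V, (2 * κ i + ∑ j : V, if G.Adj i j then w i j else 0) / (2 * μ i) with hDdef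
    have hdeg_nonneg : ∀ i, 0 ≤ ∑ j : V, if G.Adj i j then w i j else 0 := fun i =>
      Finset.sum_nonneg fun j _ => by
        split_ifs with h
        · exact (hw i j h).le
        · exact le_refl 0
    have hterm : ∀ i, 0 ≤ (2 * κ i + ∑ j : V, if G.Adj i j then w i j else 0) / (2 * μ i) := by
      intro i
      apply div_nonneg
      · have := hdeg_nonneg i
        have := hκ i
        linarith
      · linarith [hμ i]
    have hD0 : 0 ≤ D := Real.iSup_nonneg hterm
    rcases hD0.eq_or_lt with hD | hD
    · rw [← hD, div_zero, div_zero, Real.zero_rpow (one_div_ne_zero hp0.ne'),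
        Real.zero_rpow (one_div_ne_zero hq0.ne'), mul_zero, mul_zero]
    · rcases eq_or_lt_of_le hpq with rfl | hpq'
      · -- p = q
        have hgf : phiMap p p f = f := by
          funext i
          show |f i| ^ (p/p) * Real.sign (f i) = f i
          rw [div_self hp0.ne', Real.rpow_one]
          rcases lt_trichotomy (f i) 0 with h | h | h
          · rw [Real.sign_of_neg h, abs_of_neg h]; ring
          · rw [h]; simp
          · rw [Real.sign_of_pos h, abs_of_pos h]; ring
        rw [hgf]
      · -- p < q
        have ht0 : 0 < p / q := by positivity
        have ht1 : p / q < 1 := (div_lt_one hq0).2 hpq'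
        have h1t : 0 < 1 - p / q := by linarith
        set Bq := ∑ i : V, ∑ j : V,
            if G.Adj i j then w i j * ((|f i| ^ q + |f j| ^ q) / 2) else 0 with hBq
        have hBq_nonneg : 0 ≤ Bq := Finset.sum_nonneg fun i _ => Finset.sum_nonneg fun j _ => by
          split_ifs with h
          · exact mul_nonneg (hw i j h).le (by positivity)
          · exact le_refl 0
        -- Hölder step
        set A : (V × V) ⊕ V → ℝ := Sum.elim
            (fun x => (if G.Adj x.1 x.2 then
              w x.1 x.2 * |phiMap q p f x.1 - sgn x.1 x.2 * phiMap q p f x.2| ^ p else 0) / 2)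
            (fun i => κ i * |f i| ^ q) with hA
        set U : (V × V) ⊕ V → ℝ := Sum.elim
            (fun x => (if G.Adj x.1 x.2 then
              w x.1 x.2 * ((|f x.1| ^ q + |f x.2| ^ q) / 2) else 0) / 2)
            (fun i => κ i * |f i| ^ q) with hU
        set W : (V × V) ⊕ V → ℝ := Sum.elim
            (fun x => (if G.Adj x.1 x.2 then
              w x.1 x.2 * |f x.1 - sgn x.1 x.2 * f x.2| ^ q else 0) / 2)
            (fun i => κ i * |f i| ^ q) with hW
        have hUnn : ∀ k, 0 ≤ U k := by
          rintro (⟨i, j⟩ | i)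
          · simp only [hU, Sum.elim_inl]
            split_ifs with h
            · exact div_nonneg (mul_nonneg (hw i j h).le (by positivity)) (by norm_num)
            · norm_num
          · exact mul_nonneg (hκ i) (Real.rpow_nonneg (abs_nonneg _) _)
        have hWnn : ∀ k, 0 ≤ W k := by
          rintro (⟨i, j⟩ | i)
          · simp only [hW, Sum.elim_inl]
            split_ifs with h
            · exact div_nonneg (mul_nonneg (hw i j h).le (Real.rpow_nonneg (abs_nonneg _) _))
                (by norm_num)
            · norm_num
          · exact mul_nonneg (hκ i) (Real.rpow_nonneg (abs_nonneg _) _)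
        have hAsum : ∑ k, A k = Ep / 2 + Kq := by
          rw [Fintype.sum_sum_type]
          simp only [hA, Sum.elim_inl, Sum.elim_inr]
          congr 1
          · rw [Fintype.sum_prod_type, hEp]
            simp [Finset.sum_div]
        have hUsum : ∑ k, U k = Bq / 2 + Kq := by
          rw [Fintype.sum_sum_type]
          simp only [hU, Sum.elim_inl, Sum.elim_inr]
          congr 1
          · rw [Fintype.sum_prod_type, hBq]
            simp [Finset.sum_div]
        have hWsum : ∑ k, W k = Eq2 / 2 + Kq := by
          rw [Fintype.sum_sum_type]
          simp only [hW, Sum.elim_inl, Sum.elim_inr]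
          congr 1
          · rw [Fintype.sum_prod_type, hEq2]
            simp [Finset.sum_div]
        have hpoint : ∀ k, A k ≤ (q/p) ^ p * (U k ^ (1 - p/q) * W k ^ (p/q)) := by
          rintro (⟨i, j⟩ | i)
          · simp only [hA, hU, hW, Sum.elim_inl]
            by_cases hadj : G.Adj i j
            · simp only [if_pos hadj]
              have habsσ : |sgn i j * f j| = |f j| := by
                rcases hsgn i j hadj with h | h <;> rw [h] <;> simp
              have hk := RayMono.keyB hp hpq (f i) (sgn i j * f j)
              rw [habsσ, ← hσg i j hadj] at hk
              have hw2 : (0:ℝ) ≤ w i j / 2 := by linarith [(hw i j hadj).le]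
              have hCnn : (0:ℝ) ≤ (|f i| ^ q + |f j| ^ q) / 2 := by positivity
              have hVnn : (0:ℝ) ≤ |f i - sgn i j * f j| ^ q :=
                Real.rpow_nonneg (abs_nonneg _) _
              calc (w i j * |phiMap q p f i - sgn i j * phiMap q p f j| ^ p) / 2
                  = (w i j / 2) * |phiMap q p f i - sgn i j * phiMap q p f j| ^ p := by ring
                _ ≤ (w i j / 2) * ((q/p) ^ p * (((|f i| ^ q + |f j| ^ q)/2) ^ (1 - p/q)
                      * (|f i - sgn i j * f j| ^ q) ^ (p/q))) :=
                    mul_le_mul_of_nonneg_left hk hw2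
                _ = (q/p) ^ p * (((w i j / 2) ^ (1 - p/q) * (w i j / 2) ^ (p/q))
                      * (((|f i| ^ q + |f j| ^ q)/2) ^ (1 - p/q)
                      * (|f i - sgn i j * f j| ^ q) ^ (p/q))) := by
                    rw [RayMono.rpow_split hw2]
                    ring
                _ = (q/p) ^ p * ((w i j * ((|f i| ^ q + |f j| ^ q)/2) / 2) ^ (1 - p/q)
                      * ((w i j * |f i - sgn i j * f j| ^ q) / 2) ^ (p/q)) := by
                    rw [show w i j * ((|f i| ^ q + |f j| ^ q)/2) / 2
                        = (w i j / 2) * ((|f i| ^ q + |f j| ^ q)/2) by ring,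
                      show (w i j * |f i - sgn i j * f j| ^ q) / 2
                        = (w i j / 2) * |f i - sgn i j * f j| ^ q by ring,
                      Real.mul_rpow hw2 hCnn, Real.mul_rpow hw2 hVnn]
                    ring
            · simp only [if_neg hadj]
              rw [zero_div, Real.zero_rpow (ne_of_gt h1t), zero_mul, mul_zero]
          · simp only [hA, hU, hW, Sum.elim_inr]
            have hx : (0:ℝ) ≤ κ i * |f i| ^ q :=
              mul_nonneg (hκ i) (Real.rpow_nonneg (abs_nonneg _) _)
            rw [RayMono.rpow_split hx]
            nth_rewrite 1 [← one_mul (κ i * |f i| ^ q)]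
            exact mul_le_mul_of_nonneg_right (Real.one_le_rpow hα1 hp0.le) hx
        have hHolder : Ep / 2 + Kq
            ≤ (q/p) ^ p * ((Bq/2 + Kq) ^ (1 - p/q) * (Eq2/2 + Kq) ^ (p/q)) := by
          calc Ep / 2 + Kq = ∑ k, A k := hAsum.symm
            _ ≤ ∑ k, (q/p) ^ p * (U k ^ (1 - p/q) * W k ^ (p/q)) :=
                Finset.sum_le_sum fun k _ => hpoint k
            _ = (q/p) ^ p * ∑ k, U k ^ (1 - p/q) * W k ^ (p/q) := by rw [Finset.mul_sum]
            _ ≤ (q/p) ^ p * ((∑ k, U k) ^ (1 - p/q) * (∑ k, W k) ^ (p/q)) :=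
                mul_le_mul_of_nonneg_left (RayMono.holder U W hUnn hWnn ht0 ht1)
                  (Real.rpow_nonneg hα0.le _)
            _ = (q/p) ^ p * ((Bq/2 + Kq) ^ (1 - p/q) * (Eq2/2 + Kq) ^ (p/q)) := by
                rw [hUsum, hWsum]
        -- B ≤ D
        have hBD : Bq / 2 + Kq ≤ D := by
          have e1 : Bq = (∑ i : V, ∑ j : V, if G.Adj i j then w i j * |f i| ^ q else 0) / 2
              + (∑ i : V, ∑ j : V, if G.Adj i j then w i j * |f j| ^ q else 0) / 2 := by
            rw [hBq, Finset.sum_div, Finset.sum_div, ← Finset.sum_add_distrib]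
            apply Finset.sum_congr rfl
            intro i _
            rw [Finset.sum_div, Finset.sum_div, ← Finset.sum_add_distrib]
            apply Finset.sum_congr rfl
            intro j _
            by_cases hadj : G.Adj i j
            · simp only [if_pos hadj]; ring
            · simp [hadj]
          have e2 : (∑ i : V, ∑ j : V, if G.Adj i j then w i j * |f j| ^ q else 0)
              = ∑ i : V, ∑ j : V, if G.Adj i j then w i j * |f i| ^ q else 0 := by
            rw [Finset.sum_comm]
            apply Finset.sum_congr rfl
            intro i _
            apply Finset.sum_congr rfl
            intro j _
            have hadjc : G.Adj j i ↔ G.Adj i j := G.adj_comm j i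
            by_cases hadj : G.Adj i j
            · rw [if_pos (hadjc.2 hadj), if_pos hadj, hwsymm j i]
            · rw [if_neg (fun h => hadj (hadjc.1 h)), if_neg hadj]
          have e3 : ∀ i : V, (∑ j : V, if G.Adj i j then w i j * |f i| ^ q else 0)
              = (∑ j : V, if G.Adj i j then w i j else 0) * |f i| ^ q := by
            intro i
            rw [Finset.sum_mul]
            apply Finset.sum_congr rfl
            intro j _
            by_cases hadj : G.Adj i j
            · simp [hadj]
            · simp [hadj]
          have hBsplit : Bq = ∑ i : V, (∑ j : V, if G.Adj i j then w i j else 0) * |f i| ^ q := by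
            calc Bq = (∑ i : V, ∑ j : V, if G.Adj i j then w i j * |f i| ^ q else 0) / 2
                + (∑ i : V, ∑ j : V, if G.Adj i j then w i j * |f j| ^ q else 0) / 2 := e1
              _ = ∑ i : V, ∑ j : V, if G.Adj i j then w i j * |f i| ^ q else 0 := by
                  rw [e2]; ring
              _ = ∑ i : V, (∑ j : V, if G.Adj i j then w i j else 0) * |f i| ^ q :=
                  Finset.sum_congr rfl fun i _ => e3 i
          have hper : ∀ i : V, (∑ j : V, if G.Adj i j then w i j else 0) * |f i| ^ q / 2
              + κ i * |f i| ^ q ≤ D * (μ i * |f i| ^ q) := by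
            intro i
            have hi : (2 * κ i + ∑ j : V, if G.Adj i j then w i j else 0) / (2 * μ i) ≤ D := by
              rw [hDdef]
              exact le_ciSup (f := fun i : V =>
                (2 * κ i + ∑ j : V, if G.Adj i j then w i j else 0) / (2 * μ i))
                (Set.Finite.bddAbove (Set.finite_range _)) i
            have hfq : (0:ℝ) ≤ |f i| ^ q := Real.rpow_nonneg (abs_nonneg _) _
            have hμi := hμ i
            have key : (∑ j : V, if G.Adj i j then w i j else 0) / 2 + κ i ≤ D * μ i := by
              have e : (∑ j : V, if G.Adj i j then w i j else 0) / 2 + κ i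
                  = μ i * ((2 * κ i + ∑ j : V, if G.Adj i j then w i j else 0) / (2 * μ i)) := by
                field_simp
                ring
              rw [e]
              calc μ i * ((2 * κ i + ∑ j : V, if G.Adj i j then w i j else 0) / (2 * μ i))
                  ≤ μ i * D := mul_le_mul_of_nonneg_left hi hμi.le
                _ = D * μ i := mul_comm _ _
            calc (∑ j : V, if G.Adj i j then w i j else 0) * |f i| ^ q / 2 + κ i * |f i| ^ q
                = ((∑ j : V, if G.Adj i j then w i j else 0) / 2 + κ i) * |f i| ^ q := by ring
              _ ≤ (D * μ i) * |f i| ^ q := mul_le_mul_of_nonneg_right key hfq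
              _ = D * (μ i * |f i| ^ q) := by ring
          calc Bq / 2 + Kq
              = ∑ i : V, ((∑ j : V, if G.Adj i j then w i j else 0) * |f i| ^ q / 2
                + κ i * |f i| ^ q) := by
                rw [hBsplit, hKq, Finset.sum_div, ← Finset.sum_add_distrib]
            _ ≤ ∑ i : V, D * (μ i * |f i| ^ q) := Finset.sum_le_sum fun i _ => hper i
            _ = D * ∑ i : V, μ i * |f i| ^ q := by rw [Finset.mul_sum]
            _ = D := by rw [hfs, mul_one]
        -- final chain
        have hNq0 : 0 ≤ Eq2 / 2 + Kq :=
          add_nonneg (div_nonneg hEq2_nonneg (by norm_num)) hKq_nonneg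
        have hNp0 : 0 ≤ Ep / 2 + Kq :=
          add_nonneg (div_nonneg hEp_nonneg (by norm_num)) hKq_nonneg
        have hBnn : 0 ≤ Bq / 2 + Kq :=
          add_nonneg (div_nonneg hBq_nonneg (by norm_num)) hKq_nonneg
        have hNp : Ep / 2 + Kq ≤ (q/p) ^ p * (D ^ (1 - p/q) * (Eq2/2 + Kq) ^ (p/q)) := by
          refine le_trans hHolder ?_
          apply mul_le_mul_of_nonneg_left _ (Real.rpow_nonneg hα0.le p)
          exact mul_le_mul_of_nonneg_right
            (Real.rpow_le_rpow hBnn hBD h1t.le) (Real.rpow_nonneg hNq0 _)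
        rw [hRp_val, hRq_val]
        have hXnn : 0 ≤ (Eq2 / 2 + Kq) / D := div_nonneg hNq0 hD.le
        have hdiv : (Ep / 2 + Kq) / D ≤ (q/p) ^ p * ((Eq2 / 2 + Kq) / D) ^ (p/q) := by
          rw [div_le_iff₀ hD]
          refine le_trans hNp (le_of_eq ?_)
          rw [Real.div_rpow hNq0 hD.le]
          have hDt : D ^ (1 - p/q) = D / D ^ (p/q) := by
            rw [eq_div_iff (Real.rpow_pos_of_pos hD (p/q)).ne', ← Real.rpow_add hD,
              show (1 - p/q) + p/q = (1:ℝ) by ring, Real.rpow_one]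
          rw [hDt]
          have hDq := (Real.rpow_pos_of_pos hD (p/q)).ne'
          field_simp
        have hfinal1 : ((Ep / 2 + Kq) / D) ^ (1/p)
            ≤ ((q/p) ^ p * ((Eq2 / 2 + Kq) / D) ^ (p/q)) ^ (1/p) :=
          Real.rpow_le_rpow (div_nonneg hNp0 hD.le) hdiv (by positivity)
        have hfinal2 : ((q/p) ^ p * ((Eq2 / 2 + Kq) / D) ^ (p/q)) ^ (1/p)
            = (q/p) * ((Eq2 / 2 + Kq) / D) ^ (1/q) := by
          rw [Real.mul_rpow (Real.rpow_nonneg hα0.le _) (Real.rpow_nonneg hXnn _),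
            ← Real.rpow_mul hα0.le, ← Real.rpow_mul hXnn,
            show p * (1/p) = (1:ℝ) by field_simp,
            show (p/q) * (1/p) = 1/q by field_simp,
            Real.rpow_one]
        have hone_div : (1:ℝ)/p = 1/p := rfl
        calc p * ((Ep / 2 + Kq) / D) ^ (1/p)
            ≤ p * ((q/p) * ((Eq2 / 2 + Kq) / D) ^ (1/q)) := by
              rw [← hfinal2]
              exact mul_le_mul_of_nonneg_left hfinal1 hp0.le
          _ = q * ((Eq2 / 2 + Kq) / D) ^ (1/q) := by
              rw [← mul_assoc, show p * (q/p) = q by field_simp]
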